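/- Let k be a field, let S be an integral domain that is essentially of finite type over k, and let f, g, h be a regular sequence on S. Set R = k + fS. Then the sequence fg, fh is not a regular sequence on R. -/
import Mathlib


/-- For an ideal `Q` of a commutative `k`-algebra `S`, the subalgebra `k + Q` of `S`,
consisting of all elements of the form `c • 1 + q` with `c ∈ k`, `q ∈ Q`. -/
def kPlus (k : Type*) {S : Type*} [CommRing k] [CommRing S] [Algebra k S]
    (Q : Ideal S) : Subalgebra k S where
  carrier := {s : S | ∃ c : k, s - algebraMap k S c ∈ Q}
  add_mem' := by
    rintro a b ⟨c, hc⟩ ⟨d, hd⟩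
    exact ⟨c + d, by rw [map_add]; convert Q.add_mem hc hd using 1; ring⟩
  mul_mem' := by
    rintro a b ⟨c, hc⟩ ⟨d, hd⟩
    refine ⟨c * d, ?_⟩
    have : a * b - algebraMap k S (c * d)
        = a * (b - algebraMap k S d) + algebraMap k S d * (a - algebraMap k S c) := by
      rw [map_mul]; ring
    rw [this]
    exact Q.add_mem (Q.mul_mem_left _ hd) (Q.mul_mem_left _ hc)
  algebraMap_mem' := fun c => ⟨c, by simp⟩

set_option synthInstance.maxHeartbeats 1000000 in
set_option maxHeartbeats 1000000 in
/-- Let `k` be a field, `S` a domain essentially of finite type over `k`,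
and `f, g, h` a regular sequence on `S`. Set `R = k + fS`. Then `fg, fh` is not a regular
sequence on `R`. -/
theorem kPlus_fSpan_fg_fh_not_regularSequence (k : Type*) [Field k]
    (S : Type*) [CommRing S] [IsDomain S] [Algebra k S] [Algebra.EssFiniteType k S]
    (f g h : S) (hreg : RingTheory.Sequence.IsRegular S [f, g, h]) :
    ¬ RingTheory.Sequence.IsRegular ↥(kPlus k (Ideal.span {f}))
        [(⟨f * g, 0, by
            simpa using Ideal.mem_span_singleton.mpr (dvd_mul_right f g)⟩ :
          ↥(kPlus k (Ideal.span {f}))),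
         (⟨f * h, 0, by
            simpa using Ideal.mem_span_singleton.mpr (dvd_mul_right f h)⟩ :
          ↥(kPlus k (Ideal.span {f})))] := by
  intro hR
  -- basic facts from hreg
  have hcons := (RingTheory.Sequence.isRegular_cons_iff S f [g, h]).mp hreg
  have hf : IsSMulRegular S f := hcons.1
  have hreg2 : RingTheory.Sequence.IsRegular (QuotSMulTop f S) [g, h] := hcons.2
  have hf0 : f ≠ 0 := by
    rintro rfl
    have := hf (show (0:S) • (1:S) = 0 • (0:S) by simp)
    simp at this
  have hfu : ¬ IsUnit f := by
    intro hu
    have htop : Ideal.ofList [f, g, h] = ⊤ := eq_top_iff.mpr <| by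
      rw [Ideal.ofList_cons]
      exact le_trans (le_of_eq (Ideal.span_singleton_eq_top.mpr hu).symm) le_sup_left
    exact hreg.top_ne_smul (by rw [htop, Submodule.top_smul])
  have hg' : IsSMulRegular (QuotSMulTop f S) g :=
    ((RingTheory.Sequence.isRegular_cons_iff _ g [h]).mp hreg2).1
  have hg0 : g ≠ 0 := by
    rintro rfl
    have hnt : Nontrivial (QuotSMulTop f S) := hreg2.nontrivial
    obtain ⟨x, y, hxy⟩ := hnt
    exact hxy (hg' (show (0:S) • x = 0 • y by simp))
  have hfg0 : f * g ≠ 0 := mul_ne_zero hf0 hg0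
  -- R ≠ S : there is some u ∈ S not in R
  obtain ⟨u, hu⟩ : ∃ u : S, u ∉ kPlus k (Ideal.span {f}) := by
    by_contra hall
    push_neg at hall
    obtain ⟨c, hc⟩ := hall g
    rw [Ideal.mem_span_singleton] at hc
    obtain ⟨s, hs⟩ := hc
    by_cases hc0 : c = 0
    · subst hc0
      rw [map_zero, sub_zero] at hs
      apply hfu
      have h1 : g • (Submodule.Quotient.mk (1:S) : QuotSMulTop f S)
          = g • (Submodule.Quotient.mk (0:S) : QuotSMulTop f S) := by
        rw [← Submodule.Quotient.mk_smul, ← Submodule.Quotient.mk_smul,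
          smul_eq_mul, smul_eq_mul, mul_one, mul_zero, hs,
          Submodule.Quotient.mk_zero, Submodule.Quotient.mk_eq_zero]
        exact Submodule.smul_mem_pointwise_smul s f ⊤ trivial
      have h2 := hg' h1
      rw [Submodule.Quotient.eq] at h2
      rw [← Submodule.ideal_span_singleton_smul, smul_eq_mul,
        Ideal.mul_top, Ideal.mem_span_singleton] at h2
      simpa [isUnit_iff_dvd_one] using h2
    · apply hreg.top_ne_smul
      have hmem : algebraMap k S c ∈ Ideal.ofList [f, g, h] := by
        have hgm : g ∈ Ideal.ofList [f, g, h] := Ideal.subset_span (by simp)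
        have hfm : f ∈ Ideal.ofList [f, g, h] := Ideal.subset_span (by simp)
        have heq : algebraMap k S c = g - f * s := by rw [← hs]; ring
        rw [heq]
        exact sub_mem hgm (Ideal.mul_mem_right s _ hfm)
      have htop : Ideal.ofList [f, g, h] = ⊤ :=
        Ideal.eq_top_of_isUnit_mem _ hmem
          ((algebraMap k S).isUnit_map (isUnit_iff_ne_zero.mpr hc0))
      rw [htop, Submodule.top_smul]
  -- now work in R
  obtain ⟨ha2, hRrest⟩ := (RingTheory.Sequence.isRegular_cons_iff _ _ _).mp hR
  have hb := ((RingTheory.Sequence.isRegular_cons_iff _ _ _).mp hRrest).1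
  set R' := ↥(kPlus k (Ideal.span {f})) with hR'
  set a : R' := ⟨f * g, 0, by
      simpa using Ideal.mem_span_singleton.mpr (dvd_mul_right f g)⟩ with ha_def
  set b : R' := ⟨f * h, 0, by
      simpa using Ideal.mem_span_singleton.mpr (dvd_mul_right f h)⟩ with hb_def
  have hx : f * g * u ∈ kPlus k (Ideal.span {f}) :=
    ⟨0, by simpa using Ideal.mem_span_singleton.mpr ⟨g * u, by ring⟩⟩
  have hy : f * h * u ∈ kPlus k (Ideal.span {f}) :=
    ⟨0, by simpa using Ideal.mem_span_singleton.mpr ⟨h * u, by ring⟩⟩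
  set x : R' := ⟨f * g * u, hx⟩ with hx_def
  set y : R' := ⟨f * h * u, hy⟩ with hy_def
  have hbxy : b • x = a • y := by
    apply Subtype.ext
    show (f * h) * (f * g * u) = (f * g) * (f * h * u)
    ring
  have key : b • (Submodule.Quotient.mk x : QuotSMulTop a R')
      = b • (Submodule.Quotient.mk (0 : R') : QuotSMulTop a R') := by
    rw [← Submodule.Quotient.mk_smul, ← Submodule.Quotient.mk_smul, hbxy,
      smul_zero, Submodule.Quotient.mk_zero, Submodule.Quotient.mk_eq_zero]
    exact Submodule.smul_mem_pointwise_smul y a ⊤ trivial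
  have h2 := hb key
  rw [Submodule.Quotient.eq] at h2
  rw [← Submodule.ideal_span_singleton_smul, smul_eq_mul,
    Ideal.mul_top, Ideal.mem_span_singleton] at h2
  obtain ⟨r', hr'⟩ : a ∣ x := by simpa using h2
  -- unpack
  have hval : f * g * u = (f * g) * (r' : S) := congrArg Subtype.val hr'
  have huR : u = (r' : S) := mul_left_cancel₀ hfg0 hval
  exact hu (huR ▸ r'.2)
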